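/- For every n ≥ 3 and every choice of reals 0 ≤ t_1 < t_2 < … < t_n ≤ 1, consider the points θ_i = (t_i, t_i²) ∈ ℝ² on the parabola. There exists a realizable ranking σ ∈ Σ_{n,2} whose cell is bounded by n−1 of the bisecting hyperplanes; consequently, for every set A of pairwise comparisons with |A| ≤ n−2 there exists a realizable ranking σ' ≠ σ agreeing with σ on every comparison in A. Hence, for every d ≥ 2 there are configurations of n points in ℝ^d in general position for which identifying some realizable ranking requires at least n−1 pairwise comparisons. -/

import Mathlib

/-- `i` precedes `j` in the ranking `σ` (a permutation sending rank positions to objects). -/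
def Precedes {n : ℕ} (σ : Equiv.Perm (Fin n)) (i j : Fin n) : Prop := σ.symm i < σ.symm j

/-- Realizable rankings of the configuration `θ`. -/
def realizableRankings {n d : ℕ} (θ : Fin n → EuclideanSpace ℝ (Fin d)) :
    Set (Equiv.Perm (Fin n)) :=
  {σ | ∃ r : EuclideanSpace ℝ (Fin d),
    ∀ i j : Fin n, Precedes σ i j ↔ dist (θ i) r < dist (θ j) r}

/-- Two rankings agree on the pairwise comparison given by the unordered pair `p`. -/
def AgreeOnPair {n : ℕ} (σ σ' : Equiv.Perm (Fin n)) (p : Sym2 (Fin n)) : Prop :=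
  ∀ i j : Fin n, p = s(i, j) → (Precedes σ i j ↔ Precedes σ' i j)

/-! ### Auxiliary lemmas -/

lemma aux_dist_lt_dist_iff (u v x y : ℝ) :
    dist ((WithLp.equiv 2 (Fin 2 → ℝ)).symm ![u, u^2]) ((WithLp.equiv 2 (Fin 2 → ℝ)).symm ![x, y])
      < dist ((WithLp.equiv 2 (Fin 2 → ℝ)).symm ![v, v^2]) ((WithLp.equiv 2 (Fin 2 → ℝ)).symm ![x, y])
    ↔ (u - x)^2 + (u^2 - y)^2 < (v - x)^2 + (v^2 - y)^2 := by
  rw [EuclideanSpace.dist_eq, EuclideanSpace.dist_eq,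
    Real.sqrt_lt_sqrt_iff (by positivity)]
  simp [Fin.sum_univ_two, Real.dist_eq, sq_abs]

lemma aux_caseL (u v a b : ℝ) (hu : 0 ≤ u) (huv : u < v) (hva : v ≤ a) (hab : a < b) :
    (a+b)*(b-a)^2 < (u+v)*(v-u)^2 + ((u+v)-(a+b))^2*((u+v)+2*(a+b)) := by
  have h0 : b - a < (a+b) - (u+v) := by linarith
  have h1 : (b-a)^2 < ((u+v)-(a+b))^2 := by nlinarith
  have h2 : (a+b) < (u+v)+2*(a+b) := by linarith
  have h3 : 0 < (u+v)*(v-u)^2 := mul_pos (by linarith) (pow_pos (by linarith) 2)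
  nlinarith [mul_lt_mul'' h1 h2 (sq_nonneg (b-a)) (by linarith : (0:ℝ) ≤ a + b)]

lemma aux_caseR (u v a b : ℝ) (ha : 0 ≤ a) (huv : u < v) (hbu : b ≤ u) (hab : a < b) :
    (a+b)*(b-a)^2 < (u+v)*(v-u)^2 + ((u+v)-(a+b))^2*((u+v)+2*(a+b)) := by
  have h0 : b - a < (u+v) - (a+b) := by linarith
  have h1 : (b-a)^2 < ((u+v)-(a+b))^2 := by nlinarith
  have h2 : (a+b) < (u+v)+2*(a+b) := by linarith
  have h3 : 0 < (u+v)*(v-u)^2 := mul_pos (by linarith) (pow_pos (by linarith) 2)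
  nlinarith [mul_lt_mul'' h1 h2 (sq_nonneg (b-a)) (by linarith : (0:ℝ) ≤ a + b)]

lemma aux_caseS (u v a b : ℝ) (hu : 0 ≤ u) (hua : u ≤ a) (hab : a < b) (hbv : b ≤ v)
    (hne : u < a ∨ b < v) :
    (a+b)*(b-a)^2 < (u+v)*(v-u)^2 + ((u+v)-(a+b))^2*((u+v)+2*(a+b)) := by
  have key : (u+v)*(v-u)^2 - (a+b)*(b-a)^2 =
      (b-a)*(2*(u+v)*((a-u)+(v-b)) - (b-a)*((a-u)-(v-b))) + (u+v)*((a-u)+(v-b))^2 := by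
    ring
  have hs : b ≤ u + v := by linarith
  have hαβ : 0 < (a-u)+(v-b) := by rcases hne with h|h <;> linarith
  have h5 : (b-a)*((a-u)-(v-b)) ≤ (b-a)*((a-u)+(v-b)) := by nlinarith
  have h6 : (b-a)*((a-u)+(v-b)) < 2*(u+v)*((a-u)+(v-b)) := by nlinarith
  have h7 : 0 < (b-a)*(2*(u+v)*((a-u)+(v-b)) - (b-a)*((a-u)-(v-b))) := by
    apply mul_pos (by linarith); linarith
  have h8 : 0 ≤ (u+v)*((a-u)+(v-b))^2 := mul_nonneg (by linarith) (sq_nonneg _)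
  nlinarith [mul_nonneg (sq_nonneg ((u+v)-(a+b))) (by linarith : (0:ℝ) ≤ (u+v)+2*(a+b))]

lemma aux_swap_lt {n k : ℕ} (hk : k + 1 < n) (i j : Fin n) (hij : i < j)
    (hne : ¬(i = (⟨k, by omega⟩ : Fin n) ∧ j = (⟨k+1, hk⟩ : Fin n))) :
    Equiv.swap (⟨k, by omega⟩ : Fin n) (⟨k+1, hk⟩ : Fin n) i
      < Equiv.swap (⟨k, by omega⟩ : Fin n) (⟨k+1, hk⟩ : Fin n) j := by
  have h1 : i.1 < j.1 := hij
  have h2 : ¬(i.1 = k ∧ j.1 = k+1) := by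
    intro ⟨ha, hb⟩; exact hne ⟨Fin.ext ha, Fin.ext hb⟩
  simp only [Equiv.swap_apply_def]
  split_ifs <;> simp only [Fin.lt_def, Fin.ext_iff] at * <;> omega

/-- for `n ≥ 3` points `θ_i = (t_i, t_i²)` on the parabola with
`0 ≤ t_1 < ⋯ < t_n ≤ 1`, there is a realizable ranking `σ` such that for every set `A` of
at most `n-2` pairwise comparisons some realizable ranking `σ' ≠ σ` agrees with `σ` on all
of `A`; hence identifying `σ` requires at least `n-1` pairwise comparisons. -/
theorem stmt_17 (n : ℕ) (hn : 3 ≤ n) (t : Fin n → ℝ)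
    (hmono : StrictMono t) (hrange : ∀ i : Fin n, t i ∈ Set.Icc (0 : ℝ) 1)
    (θ : Fin n → EuclideanSpace ℝ (Fin 2))
    (hθ : ∀ i : Fin n, θ i = (WithLp.equiv 2 (Fin 2 → ℝ)).symm ![t i, (t i) ^ 2]) :
    ∃ σ ∈ realizableRankings θ,
      ∀ A : Finset (Sym2 (Fin n)), A.card ≤ n - 2 →
        ∃ σ' ∈ realizableRankings θ, σ' ≠ σ ∧ ∀ p ∈ A, AgreeOnPair σ σ' p := by
  classical
  have ht0 : ∀ i, 0 ≤ t i := fun i => (hrange i).1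
  have hdist : ∀ (i j : Fin n) (x y : ℝ),
      (dist (θ i) ((WithLp.equiv 2 (Fin 2 → ℝ)).symm ![x, y]) <
        dist (θ j) ((WithLp.equiv 2 (Fin 2 → ℝ)).symm ![x, y])) ↔
      (t i - x)^2 + ((t i)^2 - y)^2 < (t j - x)^2 + ((t j)^2 - y)^2 := by
    intro i j x y
    rw [hθ i, hθ j]
    exact aux_dist_lt_dist_iff (t i) (t j) x y
  have hpre1 : ∀ i j : Fin n, Precedes 1 i j ↔ i < j := by
    intro i j; simp [Precedes, Equiv.Perm.one_symm]
  refine ⟨1, ⟨(WithLp.equiv 2 (Fin 2 → ℝ)).symm ![-(1/2), 1/2], ?_⟩, ?_⟩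
  · intro i j
    rw [hpre1, hdist]
    have hD : StrictMono (fun i : Fin n => (t i - -(1/2))^2 + ((t i)^2 - 1/2)^2) := by
      intro i j hij
      have h1 := hmono hij
      have h2 := ht0 i
      have h3 := ht0 j
      simp only
      nlinarith [mul_nonneg (mul_nonneg
        (add_nonneg (sq_nonneg (t i)) (sq_nonneg (t j))) (add_nonneg h2 h3))
        (sub_pos.2 h1).le]
    exact (hD.lt_iff_lt).symm
  intro A hA
  -- find an adjacent pair not in A
  have hex : ∃ k : ℕ, ∃ hk : k + 1 < n,
      (s(⟨k, by omega⟩, (⟨k+1, hk⟩ : Fin n)) : Sym2 (Fin n)) ∉ A := by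
    by_contra h
    push_neg at h
    have hinj : Function.Injective (fun m : Fin (n-1) =>
        (s((⟨m.1, by have := m.2; omega⟩ : Fin n), (⟨m.1+1, by have := m.2; omega⟩ : Fin n))
          : Sym2 (Fin n))) := by
      intro m m' hmm
      simp only [Sym2.eq, Sym2.rel_iff', Prod.mk.injEq, Prod.swap_prod_mk,
        Fin.mk.injEq] at hmm
      ext
      omega
    have hsub : (Finset.univ : Finset (Fin (n-1))).card ≤ A.card :=
      Finset.card_le_card_of_injOn
        (fun m : Fin (n-1) =>
          (s((⟨m.1, by have := m.2; omega⟩ : Fin n), (⟨m.1+1, by have := m.2; omega⟩ : Fin n))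
            : Sym2 (Fin n)))
        (fun m _ => h m.1 (by have := m.2; omega)) hinj.injOn
    simp only [Finset.card_univ, Fintype.card_fin] at hsub
    omega
  obtain ⟨k, hk, hkA⟩ := hex
  set K : Fin n := ⟨k, by omega⟩ with hK
  set K1 : Fin n := ⟨k+1, hk⟩ with hK1
  have hKK1 : K < K1 := by simp [hK, hK1, Fin.lt_def]
  have hab : t K < t K1 := hmono hKK1
  set a : ℝ := t K with ha
  set b : ℝ := t K1 with hb
  have ha0 : 0 ≤ a := ht0 K
  -- the set of other pairs
  set S : Finset (Fin n × Fin n) :=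
    Finset.univ.filter (fun p : Fin n × Fin n => p.1 < p.2 ∧ ¬(p.1 = K ∧ p.2 = K1)) with hSdef
  have hS : S.Nonempty := by
    by_cases h0 : k = 0
    · refine ⟨(⟨1, by omega⟩, ⟨2, by omega⟩), ?_⟩
      simp only [hSdef, Finset.mem_filter, Finset.mem_univ, true_and, hK, hK1,
        Fin.lt_def, Fin.ext_iff]
      omega
    · refine ⟨(⟨0, by omega⟩, ⟨1, by omega⟩), ?_⟩
      simp only [hSdef, Finset.mem_filter, Finset.mem_univ, true_and, hK, hK1,
        Fin.lt_def, Fin.ext_iff]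
      omega
  set V : Fin n × Fin n → ℝ := fun p =>
    (t p.1 + t p.2)*(t p.2 - t p.1)^2 + ((t p.1 + t p.2)-(a+b))^2*((t p.1 + t p.2)+2*(a+b))
    with hVdef
  have hV : ∀ p ∈ S, (a+b)*(b-a)^2 < V p := by
    rintro ⟨i, j⟩ hp
    simp only [hSdef, Finset.mem_filter, Finset.mem_univ, true_and] at hp
    obtain ⟨hij, hne⟩ := hp
    have hijn : i.1 < j.1 := hij
    rcases Nat.lt_or_ge j.1 (k+1) with hj | hj
    · have hva : t j ≤ a := by
        rw [ha]
        exact hmono.le_iff_le.mpr (by simp [Fin.le_def, hK]; omega)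
      exact aux_caseL _ _ _ _ (ht0 i) (hmono hij) hva hab
    · rcases Nat.lt_or_ge i.1 (k+1) with hi | hi
      · -- straddle
        have hua : t i ≤ a := by
          rw [ha]
          exact hmono.le_iff_le.mpr (by simp [Fin.le_def, hK]; omega)
        have hbv : b ≤ t j := by
          rw [hb]
          exact hmono.le_iff_le.mpr (by simp [Fin.le_def, hK1]; omega)
        have hstrict : t i < a ∨ b < t j := by
          rcases Nat.lt_or_ge i.1 k with h' | h'
          · left
            rw [ha]
            exact hmono (by simp [Fin.lt_def, hK]; omega)
          · right
            have hiK : i = K := Fin.ext (by simp [hK]; omega)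
            have hjK1 : j ≠ K1 := fun hj' => hne ⟨hiK, hj'⟩
            have hjv : K1.1 < j.1 := by
              have : j.1 ≠ k+1 := fun hc => hjK1 (Fin.ext (by simp [hK1]; omega))
              simp [hK1]
              omega
            rw [hb]
            exact hmono hjv
        exact aux_caseS _ _ _ _ (ht0 i) hua hab hbv hstrict
      · have hbu : b ≤ t i := by
          rw [hb]
          exact hmono.le_iff_le.mpr (by simp [Fin.le_def, hK1]; omega)
        exact aux_caseR _ _ _ _ ha0 (hmono hij) hbu hab
  set M : ℝ := S.inf' hS V with hMdef
  have hM : (a+b)*(b-a)^2 < M := by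
    rw [hMdef, Finset.lt_inf'_iff]
    exact hV
  set ε : ℝ := ((a+b)*(b-a)^2 + M)/4 with hε
  -- positivity of the comparison quantity for all pairs other than (K, K1)
  have hQpos : ∀ i j : Fin n, i < j → ¬(i = K ∧ j = K1) →
      0 < (t i + t j)*((t i)^2 + (t j)^2) - (-(a+b)^3 + ε)
        - (3*(a+b)^2/2)*(t i + t j) := by
    intro i j hij hne
    have hmem : (i, j) ∈ S := by
      simp only [hSdef, Finset.mem_filter, Finset.mem_univ, true_and]
      exact ⟨hij, hne⟩
    have hMle : M ≤ V (i, j) := Finset.inf'_le V hmem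
    have hVeq : V (i, j) =
        (t i + t j)*(t j - t i)^2 + ((t i + t j)-(a+b))^2*((t i + t j)+2*(a+b)) := rfl
    have hident : (t i + t j)*((t i)^2 + (t j)^2) - (-(a+b)^3 + ε)
          - (3*(a+b)^2/2)*(t i + t j)
        = ((t i + t j)*(t j - t i)^2 + ((t i + t j)-(a+b))^2*((t i + t j)+2*(a+b)))/2 - ε := by
      ring
    rw [hident, ← hVeq, hε]
    linarith
  have hQneg : (a + b)*(a^2 + b^2) - (-(a+b)^3 + ε) - (3*(a+b)^2/2)*(a + b) < 0 := by
    have hident : (a + b)*(a^2 + b^2) - (-(a+b)^3 + ε) - (3*(a+b)^2/2)*(a + b)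
        = (a+b)*(b-a)^2/2 - ε := by ring
    rw [hident, hε]
    linarith
  -- the distance-squared comparison function for the new reference point
  have hDlt : ∀ i j : Fin n, i < j → ¬(i = K ∧ j = K1) →
      (t i - (-(a+b)^3 + ε)/2)^2 + ((t i)^2 - (3*(a+b)^2/2+1)/2)^2
        < (t j - (-(a+b)^3 + ε)/2)^2 + ((t j)^2 - (3*(a+b)^2/2+1)/2)^2 := by
    intro i j hij hne
    have h := hQpos i j hij hne
    have hlt := hmono hij
    nlinarith [mul_pos (sub_pos.2 hlt) h]
  have hDswap :
      (t K1 - (-(a+b)^3 + ε)/2)^2 + ((t K1)^2 - (3*(a+b)^2/2+1)/2)^2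
        < (t K - (-(a+b)^3 + ε)/2)^2 + ((t K)^2 - (3*(a+b)^2/2+1)/2)^2 := by
    rw [← ha, ← hb]
    nlinarith [mul_pos (sub_pos.2 hab) (neg_pos.2 hQneg), hab]
  have horder : ∀ i j : Fin n, i < j → ¬(i = K ∧ j = K1) →
      Equiv.swap K K1 i < Equiv.swap K K1 j := by
    intro i j hij hne
    exact aux_swap_lt hk i j hij hne
  have hpresw : ∀ i j : Fin n,
      Precedes (Equiv.swap K K1) i j ↔ Equiv.swap K K1 i < Equiv.swap K K1 j := by
    intro i j; simp [Precedes, Equiv.symm_swap]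
  refine ⟨Equiv.swap K K1,
    ⟨(WithLp.equiv 2 (Fin 2 → ℝ)).symm ![(-(a+b)^3 + ε)/2, (3*(a+b)^2/2+1)/2], ?_⟩, ?_, ?_⟩
  · -- realizability of the swapped ranking
    intro i j
    rw [hpresw, hdist]
    rcases lt_trichotomy i j with h | h | h
    · by_cases hp : i = K ∧ j = K1
      · obtain ⟨h1, h2⟩ := hp
        subst h1; subst h2
        rw [Equiv.swap_apply_left, Equiv.swap_apply_right]
        constructor
        · intro hc; exact absurd hc (not_lt.2 hKK1.le)
        · intro hc; exact absurd hc (not_lt.2 hDswap.le)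
      · exact iff_of_true (horder i j h hp) (hDlt i j h hp)
    · subst h; simp
    · by_cases hp : j = K ∧ i = K1
      · obtain ⟨h1, h2⟩ := hp
        subst h1; subst h2
        rw [Equiv.swap_apply_left, Equiv.swap_apply_right]
        exact iff_of_true hKK1 hDswap
      · exact iff_of_false (not_lt.2 (horder j i h hp).le) (not_lt.2 (hDlt j i h hp).le)
  · -- the swap is not the identity
    intro hc
    have h1 : Equiv.swap K K1 K = (1 : Equiv.Perm (Fin n)) K := by rw [hc]
    rw [Equiv.swap_apply_left] at h1
    simp only [Equiv.Perm.coe_one, id_eq] at h1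
    exact absurd (Fin.ext_iff.mp h1) (by simp [hK, hK1])
  · -- agreement on all pairs of A
    intro p hp i j hpij
    have hpne : ¬((i = K ∧ j = K1) ∨ (i = K1 ∧ j = K)) := by
      rintro (⟨h1, h2⟩ | ⟨h1, h2⟩) <;> subst h1 <;> subst h2
      · exact hkA (hpij ▸ hp)
      · exact hkA ((hpij.trans (Sym2.eq_swap)) ▸ hp)
    rw [hpre1, hpresw]
    rcases lt_trichotomy i j with h | h | h
    · exact iff_of_true h (horder i j h (fun hc => hpne (Or.inl hc)))
    · subst h; simp
    · exact iff_of_false (not_lt.2 h.le)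
        (not_lt.2 (horder j i h (fun hc => hpne (Or.inr ⟨hc.2, hc.1⟩))).le)
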